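/- Let x_1, ..., x_{d+1} be points in R^d and G_1, ..., G_{d+1} oriented hyperplanes such that Δ = ∩_{i=1}^{d+1} G_i^- is a nonempty bounded open set (an open d-simplex), and for each i the point x_i lies in the closure of the cone ∩_{j ≠ i} G_j^+. Then Δ is contained in the convex hull of {x_1, ..., x_{d+1}}. -/

import Mathlib

open Set

set_option maxHeartbeats 2000000 in
/-- If `Δ = ⋂ i, G_i⁻` is a nonempty bounded open set and each point
`x i` lies in the closure of the cone `⋂_{j ≠ i} G_j⁺`, then `Δ` is contained in
the convex hull of `{x 1, ..., x (d+1)}`. -/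
theorem stmt3 (d : ℕ) (x : Fin (d + 1) → Fin d → ℝ)
    (f : Fin (d + 1) → (Fin d → ℝ) →ₗ[ℝ] ℝ) (c : Fin (d + 1) → ℝ)
    (hf : ∀ i, f i ≠ 0)
    (hne : (⋂ i, {y : Fin d → ℝ | f i y < c i}).Nonempty)
    (hbd : Bornology.IsBounded (⋂ i, {y : Fin d → ℝ | f i y < c i}))
    (hx : ∀ i, x i ∈ closure (⋂ j, ⋂ (_ : j ≠ i), {y : Fin d → ℝ | c j < f j y})) :
    (⋂ i, {y : Fin d → ℝ | f i y < c i}) ⊆ convexHull ℝ (Set.range x) := by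
  classical
  intro y hy
  have hyΔ : ∀ i, f i y < c i := fun i => Set.mem_iInter.1 hy i
  obtain ⟨y0, hy0⟩ := hne
  have hy0' : ∀ i, f i y0 < c i := fun i => Set.mem_iInter.1 hy0 i
  -- Lemma A : the recession cone of Δ is trivial
  have lemA : ∀ v : Fin d → ℝ, (∀ i, f i v ≤ 0) → v = 0 := by
    intro v hv
    by_contra hv0
    obtain ⟨r, hr⟩ := (Metric.isBounded_iff_subset_closedBall 0).1 hbd
    have hvn : 0 < ‖v‖ := norm_pos_iff.2 hv0
    have hr0 : ‖y0‖ ≤ r := by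
      have := hr hy0
      simpa [Metric.mem_closedBall, dist_zero_right] using this
    set t : ℝ := (r + ‖y0‖ + 1) / ‖v‖ with ht
    have htpos : 0 ≤ t := div_nonneg (by linarith [norm_nonneg y0]) hvn.le
    have hmem : y0 + t • v ∈ ⋂ i, {y : Fin d → ℝ | f i y < c i} := by
      refine Set.mem_iInter.2 fun i => ?_
      have : f i (y0 + t • v) = f i y0 + t * f i v := by
        simp [map_add, map_smul, smul_eq_mul]
      have h2 : t * f i v ≤ 0 := mul_nonpos_of_nonneg_of_nonpos htpos (hv i)
      have := hy0' i
      simp only [Set.mem_setOf_eq]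
      linarith [show f i (y0 + t • v) = f i y0 + t * f i v from by
        simp [map_add, map_smul, smul_eq_mul]]
    have hball := hr hmem
    have hnorm : ‖y0 + t • v‖ ≤ r := by
      simpa [Metric.mem_closedBall, dist_zero_right] using hball
    have htv : ‖t • v‖ = r + ‖y0‖ + 1 := by
      rw [norm_smul, Real.norm_eq_abs, abs_of_nonneg htpos, ht,
        div_mul_cancel₀ _ (ne_of_gt hvn)]
    have : ‖t • v‖ ≤ ‖y0 + t • v‖ + ‖y0‖ := by
      calc ‖t • v‖ = ‖(y0 + t • v) - y0‖ := by congr 1; abel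
        _ ≤ ‖y0 + t • v‖ + ‖y0‖ := norm_sub_le _ _
    linarith
  -- The map Φ v = (f i v)_i is injective
  set Φ : (Fin d → ℝ) →ₗ[ℝ] (Fin (d + 1) → ℝ) := LinearMap.pi f with hΦ
  have hΦapp : ∀ v i, Φ v i = f i v := fun v i => rfl
  have hΦinj : Function.Injective Φ := by
    rw [← LinearMap.ker_eq_bot]
    rw [LinearMap.ker_eq_bot']
    intro v hv
    refine lemA v fun i => ?_
    have : Φ v i = 0 := by rw [hv]; rfl
    rw [hΦapp] at this
    exact le_of_eq this
  -- a nontrivial linear relation among the f i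
  have hnli : ¬ LinearIndependent ℝ f := by
    intro h
    have hcard := h.fintype_card_le_finrank
    rw [Fintype.card_fin] at hcard
    have : Module.finrank ℝ ((Fin d → ℝ) →ₗ[ℝ] ℝ) = d := by
      have h1 : Module.finrank ℝ (Module.Dual ℝ (Fin d → ℝ)) = d := by
        rw [Subspace.dual_finrank_eq, Module.finrank_fin_fun]
      exact h1
    omega
  obtain ⟨lam, hrel, k0, hk0⟩ := Fintype.not_linearIndependent_iff.1 hnli
  -- the functional L u = ∑ lam i * u i
  set L : (Fin (d + 1) → ℝ) →ₗ[ℝ] ℝ :=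
    ∑ i : Fin (d + 1), lam i • (LinearMap.proj i : (Fin (d + 1) → ℝ) →ₗ[ℝ] ℝ) with hL
  have hLapp : ∀ u : Fin (d + 1) → ℝ, L u = ∑ i, lam i * u i := by
    intro u
    simp [hL, LinearMap.sum_apply, LinearMap.smul_apply, LinearMap.proj_apply, smul_eq_mul]
  have hLsingle : ∀ (j : Fin (d + 1)) (a : ℝ), L (Pi.single j a) = lam j * a := by
    intro j a
    rw [hLapp]
    rw [Finset.sum_eq_single j]
    · simp
    · intro i _ hij
      simp [Pi.single_apply, hij]
    · intro h
      exact absurd (Finset.mem_univ j) h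
  -- range Φ = ker L
  have hrelapp : ∀ v, ∑ i, lam i * f i v = 0 := by
    intro v
    have := LinearMap.congr_fun hrel v
    simpa [LinearMap.sum_apply, LinearMap.smul_apply, smul_eq_mul] using this
  have hle : LinearMap.range Φ ≤ LinearMap.ker L := by
    rintro u ⟨v, rfl⟩
    rw [LinearMap.mem_ker, hLapp]
    exact hrelapp v
  have hLsurj : Function.Surjective L := by
    intro r
    refine ⟨Pi.single k0 (r / lam k0), ?_⟩
    rw [hLsingle, mul_div_cancel₀ _ hk0]
  have hrange : LinearMap.range Φ = LinearMap.ker L := by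
    refine Submodule.eq_of_le_of_finrank_eq hle ?_
    have h1 : Module.finrank ℝ (LinearMap.range Φ) = d := by
      rw [LinearMap.finrank_range_of_inj hΦinj, Module.finrank_fin_fun]
    have h2 : Module.finrank ℝ (LinearMap.ker L) = d := by
      have h3 := LinearMap.finrank_range_add_finrank_ker L
      rw [LinearMap.range_eq_top.2 hLsurj] at h3
      rw [finrank_top, Module.finrank_self, Module.finrank_fin_fun] at h3
      omega
    rw [h1, h2]
  -- key lemma: nonpositive vectors in ker L are zero
  have key : ∀ u : Fin (d + 1) → ℝ, (∀ i, u i ≤ 0) → L u = 0 → u = 0 := by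
    intro u hu hLu
    have hmem : u ∈ LinearMap.range Φ := by rw [hrange]; exact LinearMap.mem_ker.2 hLu
    obtain ⟨v, rfl⟩ := hmem
    have : v = 0 := lemA v fun i => hu i
    rw [this, map_zero]
  -- all lam i are nonzero
  have hall : ∀ i, lam i ≠ 0 := by
    intro i hi
    have hu : ∀ j, (-(Pi.single i 1) : Fin (d + 1) → ℝ) j ≤ 0 := by
      intro j
      simp only [Pi.neg_apply, neg_nonpos]
      by_cases hj : j = i <;> simp [Pi.single_apply, hj]
    have hLu : L (-(Pi.single i 1)) = 0 := by
      rw [map_neg, hLsingle, hi]; ring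
    have := key _ hu hLu
    have := congrFun this i
    simp at this
  -- all lam i have the same sign
  have hsign : (∀ i, 0 < lam i) ∨ (∀ i, lam i < 0) := by
    by_contra hcon
    push_neg at hcon
    obtain ⟨⟨p, hp⟩, ⟨n, hn⟩⟩ := hcon
    have hp' : lam p < 0 := lt_of_le_of_ne hp (hall p)
    have hn' : 0 < lam n := lt_of_le_of_ne hn (Ne.symm (hall n))
    have hpn : p ≠ n := by intro h; rw [h] at hp'; linarith
    set u : Fin (d + 1) → ℝ :=
      lam p • (Pi.single n (1 : ℝ) : Fin (d + 1) → ℝ)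
        + (-(lam n)) • (Pi.single p (1 : ℝ) : Fin (d + 1) → ℝ) with hu
    have hu0 : ∀ j, u j ≤ 0 := by
      intro j
      simp only [hu, Pi.add_apply, Pi.smul_apply, smul_eq_mul]
      have h1 : (0 : ℝ) ≤ (Pi.single n (1 : ℝ) : Fin (d + 1) → ℝ) j := by
        by_cases hj : j = n <;> simp [Pi.single_apply, hj]
      have h2 : (0 : ℝ) ≤ (Pi.single p (1 : ℝ) : Fin (d + 1) → ℝ) j := by
        by_cases hj : j = p <;> simp [Pi.single_apply, hj]
      nlinarith
    have hLu : L u = 0 := by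
      rw [hu, map_add, map_smul, map_smul, hLsingle, hLsingle]
      simp [smul_eq_mul]
      ring
    have hzero := key u hu0 hLu
    have hcf : u n = 0 := by rw [hzero]; rfl
    have hval : u n = lam p := by
      simp only [hu, Pi.add_apply, Pi.smul_apply, smul_eq_mul]
      rw [Pi.single_eq_same, Pi.single_apply, if_neg (Ne.symm hpn)]
      ring
    rw [hval] at hcf
    exact hall p hcf
  -- normalize: get strictly positive coefficients
  obtain ⟨lm, hlmrel, hlmpos⟩ :
      ∃ lm : Fin (d + 1) → ℝ, (∀ v, ∑ i, lm i * f i v = 0) ∧ ∀ i, 0 < lm i := by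
    rcases hsign with h | h
    · exact ⟨lam, hrelapp, h⟩
    · refine ⟨-lam, fun v => ?_, fun i => by simpa using neg_pos.2 (h i)⟩
      have := hrelapp v
      simp only [Pi.neg_apply, neg_mul]
      rw [Finset.sum_neg_distrib, this, neg_zero]
  -- facts about the x i
  have hxk : ∀ (k : Fin (d + 1)) (i : Fin (d + 1)), i ≠ k → c i ≤ f i (x k) := by
    intro k i hik
    have hsub : (⋂ j, ⋂ (_ : j ≠ k), {y : Fin d → ℝ | c j < f j y}) ⊆
        {y : Fin d → ℝ | c i ≤ f i y} := by
      intro z hz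
      have h' : c i < f i z := Set.mem_iInter.1 (Set.mem_iInter.1 hz i) hik
      exact le_of_lt h'
    have hclosed : IsClosed {y : Fin d → ℝ | c i ≤ f i y} := by
      have hcont : Continuous (f i) := (f i).continuous_of_finiteDimensional
      exact IsClosed.preimage hcont isClosed_Ici
    exact closure_minimal hsub hclosed (hx k)
  -- separation argument
  by_contra hyC
  have hCconv : Convex ℝ (convexHull ℝ (Set.range x)) := convex_convexHull ℝ _
  have hCcl : IsClosed (convexHull ℝ (Set.range x)) :=
    ((Set.finite_range x).isCompact_convexHull (𝕜 := ℝ)).isClosed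
  obtain ⟨g, u, hgb, hgy⟩ := geometric_hahn_banach_closed_point hCconv hCcl hyC
  -- represent g as a combination of the f i
  obtain ⟨h, hh⟩ := LinearMap.dualMap_surjective_of_injective hΦinj
    (g : (Fin d → ℝ) →ₗ[ℝ] ℝ)
  set μ : Fin (d + 1) → ℝ := fun i => h (fun j => if i = j then (1 : ℝ) else 0) with hμ
  have hgrep : ∀ v, g v = ∑ i, μ i * f i v := by
    intro v
    have h1 : h (Φ v) = g v := by
      have := LinearMap.congr_fun hh v
      exact this
    rw [← h1, LinearMap.pi_apply_eq_sum_univ h (Φ v)]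
    refine Finset.sum_congr rfl fun i _ => ?_
    rw [hΦapp, smul_eq_mul, mul_comm]
  -- shift the coefficients to make them nonnegative with one zero
  obtain ⟨k, -, hk⟩ := Finset.exists_max_image Finset.univ
    (fun i => -μ i / lm i) ⟨0, Finset.mem_univ 0⟩
  set t : ℝ := -μ k / lm k with htdef
  set ν : Fin (d + 1) → ℝ := fun i => μ i + t * lm i with hν
  have hν0 : ∀ i, 0 ≤ ν i := by
    intro i
    have h1 : -μ i / lm i ≤ t := hk i (Finset.mem_univ i)
    have h2 : -μ i ≤ t * lm i := by
      rw [div_le_iff₀ (hlmpos i)] at h1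
      linarith [h1]
    simp only [hν]
    linarith
  have hνk : ν k = 0 := by
    simp only [hν, htdef]
    rw [div_mul_cancel₀ _ (ne_of_gt (hlmpos k))]
    ring
  have hgv : ∀ v, g v = ∑ i, ν i * f i v := by
    intro v
    rw [hgrep v]
    have : ∑ i, ν i * f i v = ∑ i, μ i * f i v + t * ∑ i, lm i * f i v := by
      rw [Finset.mul_sum, ← Finset.sum_add_distrib]
      refine Finset.sum_congr rfl fun i _ => ?_
      simp only [hν]; ring
    rw [this, hlmrel v, mul_zero, add_zero]
  -- final chain of inequalities
  have h1 : g y ≤ ∑ i, ν i * c i := by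
    rw [hgv y]
    refine Finset.sum_le_sum fun i _ => ?_
    exact mul_le_mul_of_nonneg_left (le_of_lt (hyΔ i)) (hν0 i)
  have h2 : ∑ i, ν i * c i ≤ g (x k) := by
    rw [hgv (x k)]
    refine Finset.sum_le_sum fun i _ => ?_
    by_cases hik : i = k
    · subst hik; rw [hνk]; simp
    · exact mul_le_mul_of_nonneg_left (hxk k i hik) (hν0 i)
  have h3 : g (x k) < u := hgb (x k) (subset_convexHull ℝ _ (Set.mem_range_self k))
  linarith
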